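/- arXiv:1708.04268 — 6 statements merged into one kernel-verified Lean document; each statement's English description precedes it below -/
import Mathlib

section
/- Let (B, n) be a discrete valuation ring with uniformizer s, and let D ⊆ B be a subring such that n^i ⊆ D for some positive integer i, and such that the composite map D → B → B/n is surjective. Then the subring D[s] generated by D and s equals B. -/
/-- Let `(B, n)` be a DVR with uniformizer `s`, and `D ⊆ B` a subring
such that `n ^ i ⊆ D` for some `i > 0` and such that the composite `D → B → B/n` is
surjective (every element of `B` is congruent mod `n` to an element of `D`).
Then the subring generated by `D` and `s` is all of `B`. -/
theorem subring_adjoin_uniformizer_eq_top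
    (B : Type*) [CommRing B] [IsDomain B] [IsDiscreteValuationRing B]
    (s : B) (hs : IsLocalRing.maximalIdeal B = Ideal.span {s})
    (D : Subring B) (i : ℕ) (hi : 0 < i)
    (hni : ∀ x ∈ (IsLocalRing.maximalIdeal B) ^ i, x ∈ D)
    (hsurj : ∀ b : B, ∃ d ∈ D, b - d ∈ IsLocalRing.maximalIdeal B) :
    Subring.closure ((D : Set B) ∪ {s}) = ⊤ := by
  set C := Subring.closure ((D : Set B) ∪ {s}) with hC
  have hDC : ∀ d ∈ D, d ∈ C := fun d hd =>
    Subring.subset_closure (Or.inl hd)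
  have hsC : s ∈ C := Subring.subset_closure (Or.inr rfl)
  have key : ∀ k : ℕ, ∀ b : B, ∃ c ∈ C, ∃ b' : B, b = c + s ^ k * b' := by
    intro k
    induction k with
    | zero => intro b; exact ⟨0, C.zero_mem, b, by simp⟩
    | succ k ih =>
      intro b
      obtain ⟨c, hc, b', hb'⟩ := ih b
      obtain ⟨d, hd, hm⟩ := hsurj b'
      rw [hs, Ideal.mem_span_singleton] at hm
      obtain ⟨b'', hb''⟩ := hm
      refine ⟨c + s ^ k * d, C.add_mem hc (C.mul_mem (C.pow_mem hsC k) (hDC d hd)), b'', ?_⟩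
      have : b' = d + s * b'' := by rw [← hb'']; ring
      rw [hb', this]; ring
  have hsmem : s ∈ IsLocalRing.maximalIdeal B := by
    rw [hs]; exact Ideal.mem_span_singleton_self s
  rw [eq_top_iff]
  intro b _
  obtain ⟨c, hc, b', hb'⟩ := key i b
  have : s ^ i * b' ∈ D := hni _ (Ideal.mul_mem_right _ _ (Ideal.pow_mem_pow hsmem i))
  rw [hb']
  exact C.add_mem hc (hDC _ this)
end

section
/- Let R be a commutative ring of characteristic p > 0 and d : R → R a derivation. Then the p-fold composite d^p (composition of d with itself p times) is again a derivation of R. -/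
open Finset in
lemma iterate_derivation_leibniz_formula
    (R : Type*) [CommRing R] (d : Derivation ℤ R R) (n : ℕ) (a b : R) :
    (⇑d)^[n] (a * b) =
      ∑ k ∈ range (n + 1), (n.choose k) • ((⇑d)^[k] a * (⇑d)^[n - k] b) := by
  induction n with
  | zero => simp
  | succ n ih =>
    rw [Function.iterate_succ_apply', ih, map_sum]
    have hterm : ∀ k ∈ range (n + 1),
        d ((n.choose k) • ((⇑d)^[k] a * (⇑d)^[n - k] b)) =
        (n.choose k) • ((⇑d)^[k+1] a * (⇑d)^[n - k] b)
          + (n.choose k) • ((⇑d)^[k] a * (⇑d)^[n - k + 1] b) := by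
      intro k hk
      rw [map_nsmul, Derivation.leibniz, smul_eq_mul, smul_eq_mul, smul_add,
        Function.iterate_succ_apply', Function.iterate_succ_apply']
      ring_nf
    rw [Finset.sum_congr rfl hterm, Finset.sum_add_distrib]
    rw [Finset.sum_range_succ' (fun k => (n+1).choose k • ((⇑d)^[k] a * (⇑d)^[n+1-k] b))]
    have h1 : ∑ k ∈ range (n + 1), (n.choose k) • ((⇑d)^[k+1] a * (⇑d)^[n - k] b)
        = ∑ k ∈ range (n + 1), (n.choose k) • ((⇑d)^[k+1] a * (⇑d)^[n + 1 - (k+1)] b) := by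
      apply Finset.sum_congr rfl; intro k hk
      have : n - k = n + 1 - (k + 1) := by omega
      rw [this]
    have h2 : ∀ k ∈ range (n + 1),
        (n.choose k) • ((⇑d)^[k] a * (⇑d)^[n - k + 1] b)
        = (n.choose k) • ((⇑d)^[k] a * (⇑d)^[n + 1 - k] b) := by
      intro k hk
      rw [Finset.mem_range] at hk
      have : n - k + 1 = n + 1 - k := by omega
      rw [this]
    rw [h1, Finset.sum_congr rfl h2]
    have h3 : ∀ k, (n + 1).choose (k + 1) • ((⇑d)^[k+1] a * (⇑d)^[n+1-(k+1)] b)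
        = (n.choose k) • ((⇑d)^[k+1] a * (⇑d)^[n+1-(k+1)] b)
          + (n.choose (k+1)) • ((⇑d)^[k+1] a * (⇑d)^[n+1-(k+1)] b) := by
      intro k
      rw [Nat.choose_succ_succ, add_smul]
    simp only [h3]
    rw [Finset.sum_add_distrib]
    have h4 : ∑ k ∈ range (n + 1), (n.choose (k+1)) • ((⇑d)^[k+1] a * (⇑d)^[n+1-(k+1)] b)
        = ∑ k ∈ range (n + 2), (n.choose k) • ((⇑d)^[k] a * (⇑d)^[n+1-k] b)
          - (n.choose 0) • ((⇑d)^[0] a * (⇑d)^[n+1-0] b) := by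
      rw [Finset.sum_range_succ' (fun k => (n.choose k) • ((⇑d)^[k] a * (⇑d)^[n+1-k] b))]
      ring
    have h5 : ∑ k ∈ range (n + 2), (n.choose k) • ((⇑d)^[k] a * (⇑d)^[n+1-k] b)
        = ∑ k ∈ range (n + 1), (n.choose k) • ((⇑d)^[k] a * (⇑d)^[n+1-k] b) := by
      rw [Finset.sum_range_succ]
      simp [Nat.choose_succ_self]
    rw [h4, h5]
    simp [Nat.choose_zero_right]
    ring

open Finset in
/-- Let `R` be a commutative ring of characteristic `p > 0` and
`d : R → R` a derivation.  Then the `p`-fold composite `d^[p]` again satisfies the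
Leibniz rule, i.e. it is again a derivation of `R`. -/
theorem iterate_p_derivation_is_derivation
    (R : Type*) [CommRing R] (p : ℕ) (hp : p.Prime) [CharP R p]
    (d : Derivation ℤ R R) :
    ∀ a b : R, (⇑d)^[p] (a * b) = a * (⇑d)^[p] b + b * (⇑d)^[p] a := by
  intro a b
  rw [iterate_derivation_leibniz_formula]
  have hvanish : ∀ k, k ≠ 0 → k ≠ p → k < p + 1 →
      (p.choose k) • ((⇑d)^[k] a * (⇑d)^[p - k] b) = 0 := by
    intro k h0 hp' hk
    obtain ⟨c, hc⟩ := hp.dvd_choose_self h0 (by omega)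
    rw [hc, mul_smul]
    have : (p • ((c • ((⇑d)^[k] a * (⇑d)^[p - k] b)) : R)) =
        (p : R) * (c • ((⇑d)^[k] a * (⇑d)^[p - k] b)) := nsmul_eq_mul _ _
    rw [this, CharP.cast_eq_zero R p, zero_mul]
  rw [Finset.sum_range_succ]
  rw [Finset.sum_eq_single_of_mem 0 (Finset.mem_range.mpr hp.pos)
    (fun k hk h0 => hvanish k h0 (by rw [Finset.mem_range] at hk; omega)
      (by rw [Finset.mem_range] at hk; omega))]
  simp [Nat.choose_self]
  ring
end

section
/- Let p be a prime and a, c, j_0 positive integers with p ∤ (a+1) and a + 1 ≤ j_0 and a + 1 ≡ j_0 (mod p). Suppose Θ is a set of positive integers not divisible by p, with minimum j_0, containing all integers d ≥ c not divisible by p, and closed under the operation j ↦ j − (a+1) whenever j − (a+1) > 0 and p ∤ (j − (a+1)). Then c ≥ (p−1)a. -/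
/-- Auxiliary: if `t + k*(a+1) = p*a` with `0 < k < p` and `p ∤ a+1`, then `t` is
positive and not divisible by `p`. -/
lemma conductor_aux (p a t k : ℕ) (hp : p.Prime) (hpa : ¬ p ∣ (a + 1))
    (hk : 0 < k) (hkp : k < p) (ht : t + k * (a + 1) = p * a) :
    0 < t ∧ ¬ p ∣ t := by
  have hnd : ¬ p ∣ k * (a + 1) := by
    intro h
    rcases (Nat.Prime.dvd_mul hp).mp h with h | h
    · exact Nat.not_dvd_of_pos_of_lt hk hkp h
    · exact hpa h
  constructor
  · rcases Nat.eq_zero_or_pos t with h0 | h0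
    · exact absurd ⟨a, by omega⟩ hnd
    · exact h0
  · intro hdvd
    exact hnd (by
      have : k * (a + 1) = p * a - t := by omega
      rw [this]
      exact Nat.dvd_sub (dvd_mul_right p a) hdvd)

/-- Combinatorial core of the conductor bound.  Let `p` be a prime and
`a, c, j₀` positive integers with `p ∤ a + 1`, `a + 1 ≤ j₀` and `a + 1 ≡ j₀ (mod p)`.
Suppose `Θ` is a set of positive integers not divisible by `p`, with minimum `j₀`,
containing every `d ≥ c` not divisible by `p`, and closed under `j ↦ j − (a+1)` whenever
the result is positive and not divisible by `p`.  Then `c ≥ (p − 1) · a`. -/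
theorem conductor_combinatorial_bound
    (p a c j₀ : ℕ) (hp : p.Prime) (ha : 0 < a) (hc : 0 < c) (hj₀ : 0 < j₀)
    (hpa : ¬ p ∣ (a + 1)) (hle : a + 1 ≤ j₀) (hmod : a + 1 ≡ j₀ [MOD p])
    (Θ : Set ℕ)
    (hΘ : ∀ j ∈ Θ, 0 < j ∧ ¬ p ∣ j)
    (hmem : j₀ ∈ Θ) (hmin : ∀ j ∈ Θ, j₀ ≤ j)
    (hbig : ∀ d : ℕ, c ≤ d → ¬ p ∣ d → d ∈ Θ)
    (hclosed : ∀ j ∈ Θ, 0 < j - (a + 1) → ¬ p ∣ (j - (a + 1)) → j - (a + 1) ∈ Θ) :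
    (p - 1) * a ≤ c := by
  by_contra hcon
  push_neg at hcon
  have hp2 : 2 ≤ p := hp.two_le
  have hE : (p - 1) * a + a = p * a := by
    obtain ⟨q, rfl⟩ : ∃ q, p = q + 1 := ⟨p - 1, by omega⟩
    simp [Nat.add_sub_cancel]
    ring
  -- main induction
  have Q : ∀ m, m ≤ p - 2 →
      m * (a + 1) + 1 ≤ (p - 1) * a ∧ ((p - 1) * a - 1 - m * (a + 1)) ∈ Θ := by
    intro m
    induction m with
    | zero =>
      intro _
      have haux := conductor_aux p a ((p - 1) * a - 1) 1 hp hpa one_pos (by omega)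
        (by omega)
      refine ⟨by omega, ?_⟩
      simpa using hbig ((p - 1) * a - 1) (by omega) haux.2
    | succ n ih =>
      intro hm
      obtain ⟨h1, h2⟩ := ih (by omega)
      have hge : j₀ ≤ (p - 1) * a - 1 - n * (a + 1) := hmin _ h2
      -- so (n+1)*(a+1) ≤ (p-1)*a - 1
      have hmul : (n + 1) * (a + 1) = n * (a + 1) + (a + 1) := by ring
      have h3 : (n + 1) * (a + 1) ≤ (p - 1) * a - 1 := by omega
      have haux := conductor_aux p a ((p - 1) * a - 1 - (n + 1) * (a + 1)) (n + 2)
        hp hpa (by omega) (by omega) (by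
          have hmul2 : (n + 2) * (a + 1) = (n + 1) * (a + 1) + (a + 1) := by ring
          omega)
      refine ⟨by omega, ?_⟩
      have := hclosed _ h2 (by omega) (by
        have heq : (p - 1) * a - 1 - n * (a + 1) - (a + 1)
            = (p - 1) * a - 1 - (n + 1) * (a + 1) := by omega
        rw [heq]; exact haux.2)
      have heq : (p - 1) * a - 1 - n * (a + 1) - (a + 1)
          = (p - 1) * a - 1 - (n + 1) * (a + 1) := by omega
      rwa [heq] at this
  obtain ⟨h1, h2⟩ := Q (p - 2) le_rfl
  have hge : j₀ ≤ (p - 1) * a - 1 - (p - 2) * (a + 1) := hmin _ h2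
  have hmul : (p - 2) * (a + 1) + (a + 1) = (p - 1) * a + (p - 1) := by
    obtain ⟨q, rfl⟩ : ∃ q, p = q + 2 := ⟨p - 2, by omega⟩
    simp [Nat.add_sub_cancel]
    ring
  omega
end

section
/- Let A be an excellent integral domain, K → A a ring homomorphism from a field, and K ⊆ K_1 ⊆ K_2 finite field extensions such that A ⊗_K K_1 and A ⊗_K K_2 are integral domains. Let B and C be the normalizations of A ⊗_K K_1 and A ⊗_K K_2 respectively. Then, as ideals of C, the conductor of A ⊗_K K_2 in C contains the product of the conductor of B ⊗_{K_1} K_2 in C with the conductor of A ⊗_K K_1 in B: 𝒞(C/A) ⊇ 𝒞(C/B) · 𝒞(B/A). -/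
set_option synthInstance.maxHeartbeats 1000000
set_option maxHeartbeats 1000000

/-- Multiplicativity of conductors under composed base changes.
All rings in the diagram of the paper are realized as subrings of one field `L`
(the fraction field of `A ⊗_K K₂`): `A₁ = A ⊗_K K₁`, `A₂ = A ⊗_K K₂`, `B` the
normalization (integral closure) of `A₁`, `B₂ = B ⊗_{K₁} K₂`, and `C` the normalization
of `A₂`.  The hypothesis `hspan` records that `B₂` is generated as an `A₂`-module by
`B` (elements of `B ⊗_{K₁} K₂` are sums `Σ bᵢ ⊗ λᵢ` with `bᵢ ∈ B`, `λᵢ ∈ K₂ ⊆ A₂`).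
The conductors are `𝒞(B/A) = {x : x·B ⊆ A₁}`, `𝒞(C/B) = {x : x·C ⊆ B₂}` and
`𝒞(C/A) = {x : x·C ⊆ A₂}`; the conclusion is `𝒞(C/B)·𝒞(B/A) ⊆ 𝒞(C/A)`. -/
theorem conductor_multiplicative
    (L : Type*) [Field L]
    (A₁ A₂ B B₂ C : Subring L)
    (h₁₂ : A₁ ≤ A₂) (h₁B : A₁ ≤ B) (hBB₂ : B ≤ B₂) (hA₂B₂ : A₂ ≤ B₂) (hB₂C : B₂ ≤ C)
    (hBint : ∀ x ∈ B, IsIntegral A₁ x) (hBcl : ∀ x : L, IsIntegral A₁ x → x ∈ B)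
    (hCint : ∀ x ∈ C, IsIntegral A₂ x) (hCcl : ∀ x : L, IsIntegral A₂ x → x ∈ C)
    (hspan : (B₂ : Set L) ⊆
      (Submodule.span A₂ (B : Set L) : Submodule A₂ L)) :
    ∀ x ∈ {x : L | ∀ b ∈ B, x * b ∈ A₁},
      ∀ y ∈ {y : L | ∀ c ∈ C, y * c ∈ B₂},
        ∀ c ∈ C, x * y * c ∈ A₂ := by
  intro x hx y hy c hc
  have hyc : y * c ∈ B₂ := hy c hc
  have key : ∀ z ∈ (Submodule.span A₂ (B : Set L) : Submodule A₂ L), x * z ∈ A₂ := by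
    intro z hz
    induction hz using Submodule.span_induction with
    | mem b hb => exact h₁₂ (hx b hb)
    | zero => simpa using A₂.zero_mem
    | add a b _ _ ha hb => rw [mul_add]; exact A₂.add_mem ha hb
    | smul a b _ hb =>
        have : x * (a • b) = (a : L) * (x * b) := by
          simp [Subring.smul_def]; ring
        rw [this]; exact A₂.mul_mem a.2 hb
  have := key (y * c) (hspan hyc)
  rwa [mul_assoc]
end

section
/- Let H_d be the Hirzebruch surface of degree d ≥ 1 with exceptional section D (D² = −d) and fiber F (F² = 0, D·F = 1), with K_{H_d} = −2D − (d+2)F. Suppose p is a prime and a, b, a' are nonnegative integers with (a,b) ≠ (0,0) satisfying the inequalities 2 − (p−1)a − a' > 0 and d + 2 − (p−1)b ≥ d(2 − (p−1)a − a'). Then (p, a, b, a') belongs to the explicit finite list: {(2,1,0,0), (2,1,1,0), (2,1,2,0)} for any d; {(2,0,2,1), (3,0,1,1)} (with equality in the second inequality); and no solutions exist with a = a' = 0 except (p,a,b,a',d) = (2,0,1,0,1) which gives equality and d = 1. -/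
/-- Numerical classification on the Hirzebruch surface `H_d` (`d ≥ 1`,
`D² = −d`, `F² = 0`, `D·F = 1`, `K = −2D−(d+2)F`).  Suppose `p` is prime and
`a, b, a'` are nonnegative integers with `(a, b) ≠ (0, 0)` such that
`2 − (p−1)a − a' > 0` and `d + 2 − (p−1)b ≥ d(2 − (p−1)a − a')`, where equality in the
second inequality is forced whenever `a' > 0` (since then the exceptional section `D` is
contracted and `Y = S_d`).  Then `(p, a, b, a')` is one of
`(2,1,0,0), (2,1,1,0), (2,1,2,0)` (any `d`), or `(2,0,2,1), (3,0,1,1)` (equality), or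
`(p,a,b,a',d) = (2,0,1,0,1)` (which gives equality and `d = 1`). -/
theorem hirzebruch_numerical_classification
    (p a b a' d : ℕ) (hp : p.Prime) (hd : 1 ≤ d) (hab : ¬(a = 0 ∧ b = 0))
    (h1 : 0 < (2 : ℤ) - ((p : ℤ) - 1) * a - a')
    (h2 : (d : ℤ) + 2 - ((p : ℤ) - 1) * b ≥ d * (2 - ((p : ℤ) - 1) * a - a'))
    (h3 : 0 < a' → (d : ℤ) + 2 - ((p : ℤ) - 1) * b = d * (2 - ((p : ℤ) - 1) * a - a')) :
    (p, a, b, a') = (2, 1, 0, 0) ∨ (p, a, b, a') = (2, 1, 1, 0) ∨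
    (p, a, b, a') = (2, 1, 2, 0) ∨ (p, a, b, a') = (2, 0, 2, 1) ∨
    (p, a, b, a') = (3, 0, 1, 1) ∨ (p, a, b, a', d) = (2, 0, 1, 0, 1) := by

  have hp2 : 2 ≤ p := hp.two_le
  have hP : (2:ℤ) ≤ (p:ℤ) := by exact_mod_cast hp2
  have hA' : (0:ℤ) ≤ (a':ℤ) := Int.natCast_nonneg _
  have hB : (0:ℤ) ≤ (b:ℤ) := Int.natCast_nonneg _
  have hD : (1:ℤ) ≤ (d:ℤ) := by exact_mod_cast hd
  rcases Nat.eq_zero_or_pos a with ha | ha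
  · -- a = 0
    subst ha
    have hb : 1 ≤ b := by omega
    have hB1 : (1:ℤ) ≤ (b:ℤ) := by exact_mod_cast hb
    push_cast at h1 h2 h3
    have ha' : a' ≤ 1 := by
      by_contra h
      have : (2:ℤ) ≤ (a':ℤ) := by exact_mod_cast (by omega : 2 ≤ a')
      linarith
    rcases Nat.eq_zero_or_pos a' with ha0 | ha1
    · -- a' = 0, so (p-1)b ≤ 2 - d, forcing d = 1, p = 2, b = 1
      subst ha0
      push_cast at h2
      have key : ((p:ℤ)-1) * b ≤ 2 - d := by linarith
      have hd1 : d = 1 := by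
        have : (d:ℤ) ≤ 1 := by nlinarith
        omega
      have hpb : ((p:ℤ)-1) * b ≤ 1 := by
        subst hd1; push_cast at key; linarith
      have hp2' : p = 2 := by
        by_contra h
        have : (3:ℤ) ≤ (p:ℤ) := by exact_mod_cast (by omega : 3 ≤ p)
        nlinarith
      have hb1 : b = 1 := by
        subst hp2'
        have : (b:ℤ) ≤ 1 := by push_cast at hpb; linarith
        omega
      subst hp2'; subst hb1; subst hd1; simp
    · -- a' = 1
      have ha'1 : a' = 1 := by omega
      subst ha'1
      have heq := h3 (by omega)
      push_cast at heq
      have key : ((p:ℤ)-1) * b = 2 := by nlinarith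
      have hp3 : p ≤ 3 := by
        by_contra h
        have : (4:ℤ) ≤ (p:ℤ) := by exact_mod_cast (by omega : 4 ≤ p)
        nlinarith
      interval_cases p
      · have : (b:ℤ) = 2 := by norm_num at key; linarith
        have hb2 : b = 2 := by exact_mod_cast this
        subst hb2; simp
      · have : (2:ℤ) * b = 2 := by norm_num at key; linarith
        have hb2 : b = 1 := by
          have : (b:ℤ) = 1 := by linarith
          exact_mod_cast this
        subst hb2; simp
  · -- a ≥ 1
    have hA : (1:ℤ) ≤ (a:ℤ) := by exact_mod_cast ha
    have hp2' : p = 2 := by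
      by_contra h
      have : (3:ℤ) ≤ (p:ℤ) := by exact_mod_cast (by omega : 3 ≤ p)
      nlinarith
    subst hp2'
    push_cast at h1 h2
    norm_num at h1 h2
    have ha1 : a = 1 := by omega
    have ha0 : a' = 0 := by omega
    subst ha1; subst ha0
    have hb2 : b ≤ 2 := by omega
    interval_cases b <;> simp
end

section
/- Let B be a commutative ring of characteristic p, A ⊆ B a subring, and C = {f ∈ B : ∂(f) = 0 for all ∂ ∈ F}, where F is a set of A-linear derivations of B. If B is an integrally closed domain, then C is integrally closed in its fraction field intersected with Frac(B); more precisely, if c ∈ Frac(B) is integral over C and is annihilated by the natural extensions of all ∂ ∈ F to Frac(B), then c ∈ C. -/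
/-- Normality of the ring of constants of a family of derivations.
Let `B` be an integrally closed domain, `A ⊆ B` a subring, `F` a set of `A`-linear
derivations of `B`, and `C = {f ∈ B : D f = 0 for all D ∈ F}` the ring of constants.
If `c ∈ Frac(B)` is integral over `C` and is annihilated by the (unique quotient-rule)
extension of every `D ∈ F` to `Frac(B)` — i.e. whenever `c = x / y` with `y ≠ 0` one has
`y·Dx = x·Dy` — then `c` lies in (the image of) `C`. -/
theorem constants_integrally_closed
    (B : Type*) [CommRing B] [IsDomain B] [IsIntegrallyClosed B]
    (A : Subring B) (F : Set (Derivation A B B))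
    (c : FractionRing B)
    (hint : RingHom.IsIntegralElem
      ((algebraMap B (FractionRing B)).comp
        (Subring.subtype
          { carrier := {f : B | ∀ D ∈ F, D f = 0}
            mul_mem' := fun {x y} hx hy D hD => by
              simp only [Set.mem_setOf_eq] at hx hy
              rw [Derivation.leibniz, hx D hD, hy D hD, smul_zero, smul_zero, add_zero]
            one_mem' := fun D _ => D.map_one_eq_zero
            add_mem' := fun {x y} hx hy D hD => by
              simp only [Set.mem_setOf_eq] at hx hy
              rw [map_add, hx D hD, hy D hD, add_zero]
            zero_mem' := fun D _ => D.map_zero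
            neg_mem' := fun {x} hx D hD => by
              simp only [Set.mem_setOf_eq] at hx
              rw [map_neg, hx D hD, neg_zero] })) c)
    (hann : ∀ D ∈ F, ∀ x y : B, y ≠ 0 →
      c * algebraMap B (FractionRing B) y = algebraMap B (FractionRing B) x →
      y * D x = x * D y) :
    ∃ b : B, (∀ D ∈ F, D b = 0) ∧ algebraMap B (FractionRing B) b = c := by
  -- c is integral over B
  obtain ⟨p, hpm, hpe⟩ := hint
  have hBint : IsIntegral B c := by
    refine ⟨p.map (Subring.subtype _), hpm.map _, ?_⟩
    rw [← Polynomial.eval₂_map] at hpe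
    simpa [Polynomial.eval₂_eq_eval_map] using hpe
  obtain ⟨b, hb⟩ := IsIntegrallyClosed.isIntegral_iff.mp hBint
  refine ⟨b, ?_, hb⟩
  intro D hD
  have := hann D hD b 1 one_ne_zero (by simp [hb])
  simpa using this
end
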